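/- In a Black-Scholes market with pricing kernel ξ_T lognormal LN(−rT − θ²T/2, θ²T), an investor targeting a lognormal terminal wealth distribution F = LN(M, Σ²) has implied utility (via U'(x) = F_{ξ_T}^{-1}(1 − F(x))) given by the CRRA form: U'(x) = a·x^{−θ√T/Σ} with a = exp(MθâˆšT/Σ − rT − θ²T/2); in particular the relative risk aversion −xU''(x)/U'(x) equals θ√T/Σ for all x > 0. -/

import Mathlib

open MeasureTheory ProbabilityTheory

lemma gauss_symm_aux (z : ℝ) : ((gaussianReal 0 1) (Set.Iic (-z))).toReal
    = 1 - ((gaussianReal 0 1) (Set.Iic z)).toReal := by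
  set μ := gaussianReal 0 1 with hμ
  have hmap : μ.map (fun x : ℝ => -x) = μ := by
    have := gaussianReal_map_const_mul (μ := 0) (v := 1) (-1)
    simpa [hμ, neg_mul, one_mul] using this
  have h1 : μ (Set.Iic (-z)) = μ (Set.Ici z) := by
    conv_lhs => rw [← hmap]
    rw [Measure.map_apply (by fun_prop) measurableSet_Iic]
    congr 1
    ext x
    simp [neg_le_neg_iff]
  haveI : NullSingletonClass μ := ⟨fun x => by
    rw [hμ, gaussianReal_of_var_ne_zero _ one_ne_zero]
    exact withDensity_absolutelyContinuous _ _ (measure_singleton x)⟩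
  have h2 : μ (Set.Ici z) = 1 - μ (Set.Iic z) := by
    rw [← measure_congr (Iio_ae_eq_Iic (a := z))]
    rw [← prob_compl_eq_one_sub measurableSet_Iio]
    simp
  rw [h1, h2, ENNReal.toReal_sub_of_le (prob_le_one) ENNReal.one_ne_top]
  simp

/-- In a Black-Scholes market, the implied marginal utility for a
lognormal target distribution `LN(M, Σ²)` is of CRRA form `a x^{−θ√T/Σ}`, and the
relative risk aversion equals `θ√T/Σ` for all `x > 0`. -/
theorem crra_from_lognormal_target
    (M Sg r T θ : ℝ) (hSg : 0 < Sg) (hT : 0 < T)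
    (Φ : ℝ → ℝ) (hΦ : ∀ x, Φ x = ((gaussianReal 0 1) (Set.Iic x)).toReal)
    (Φinv : ℝ → ℝ) (hΦinv : Function.LeftInverse Φinv Φ)
    (F : ℝ → ℝ) (hF : ∀ x > (0:ℝ), F x = Φ ((Real.log x - M) / Sg))
    (q : ℝ → ℝ)
    (hq : ∀ y, q y = Real.exp (Φinv y * (θ * Real.sqrt T) - r * T - θ ^ 2 * T / 2))
    (k a : ℝ) (hk : k = θ * Real.sqrt T / Sg)
    (ha : a = Real.exp (M * θ * Real.sqrt T / Sg - r * T - θ ^ 2 * T / 2)) :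
    (∀ x > (0:ℝ), q (1 - F x) = a * x ^ (-k)) ∧
    (∀ x > (0:ℝ),
      -x * deriv (fun y : ℝ => a * y ^ (-k)) x / (a * x ^ (-k)) = k) := by
  have hsymm : ∀ z : ℝ, 1 - Φ z = Φ (-z) := by
    intro z
    rw [hΦ, hΦ, gauss_symm_aux]
  constructor
  · intro x hx
    set w : ℝ := (Real.log x - M) / Sg with hw
    rw [hF x hx, hq, hsymm, hΦinv]
    rw [ha, Real.rpow_def_of_pos hx, ← Real.exp_add]
    congr 1
    rw [hk]
    field_simp
    ring
  · intro x hx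
    have hx' : x ≠ 0 := ne_of_gt hx
    have hd : deriv (fun y : ℝ => a * y ^ (-k)) x = a * (-k * x ^ (-k - 1)) := by
      rw [deriv_const_mul _ (Real.differentiableAt_rpow_const_of_ne (-k) hx')]
      rw [Real.deriv_rpow_const x (-k)]
    rw [hd]
    have ha' : a ≠ 0 := by rw [ha]; exact (Real.exp_pos _).ne'
    have hxk : x ^ (-k) ≠ 0 := (Real.rpow_pos_of_pos hx _).ne'
    have hxx : x * x ^ (-k - 1) = x ^ (-k) := by
      rw [mul_comm, ← Real.rpow_add_one hx']
      norm_num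
    have key : -x * (a * (-k * x ^ (-k - 1))) = k * (a * x ^ (-k)) := by
      rw [← hxx]; ring
    rw [key, mul_div_assoc, div_self (mul_ne_zero ha' hxk), mul_one]
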